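/- First-best database composition: let λ ∈ (0,1] and c > 0, and define the first-best objective W(n0,n1) = λ·V_S(n0,n1) + (1−λ)·V_L(n0,n1) − c·(n0+n1) on [0,∞)×[0,∞). If (n0*, n1*) maximizes W over [0,∞)×[0,∞), then n1* ≥ n0*; moreover, if in addition n0* > 0, then n1* > n0*. -/

import Mathlib

set_option maxHeartbeats 2000000

noncomputable def Dden (σ n0 n1 : ℝ) : ℝ :=
  σ^2 * (n0 + n1 + 2*n0*n1) + (1+n0)*(1+n1)

noncomputable def VL (σ n0 n1 : ℝ) : ℝ :=
  σ^4 * (n0 + n1 + 2*n0*n1) / Dden σ n0 n1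

noncomputable def VS (σ n0 n1 : ℝ) : ℝ :=
  VL σ n0 n1 + (3*σ^2*n0*n1 + 2*σ^2*n1 + n1 + n0*n1) / Dden σ n0 n1

lemma Dpos (σ n0 n1 : ℝ) (h0 : 0 ≤ n0) (h1 : 0 ≤ n1) : 0 < Dden σ n0 n1 := by
  unfold Dden
  nlinarith [sq_nonneg σ, mul_nonneg h0 h1, sq_nonneg (σ*(n0+n1))]

lemma Dsymm (σ n0 n1 : ℝ) : Dden σ n1 n0 = Dden σ n0 n1 := by unfold Dden; ring

theorem stmt9 (σ lam c : ℝ) (hσ : 0 < σ) (hl0 : 0 < lam) (hl1 : lam ≤ 1) (hc : 0 < c)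
    (n0 n1 : ℝ) (h0 : 0 ≤ n0) (h1 : 0 ≤ n1)
    (hmax : ∀ m0 m1 : ℝ, 0 ≤ m0 → 0 ≤ m1 →
      lam * VS σ m0 m1 + (1-lam) * VL σ m0 m1 - c*(m0+m1) ≤
      lam * VS σ n0 n1 + (1-lam) * VL σ n0 n1 - c*(n0+n1)) :
    n0 ≤ n1 ∧ (0 < n0 → n0 < n1) := by
  have hD : 0 < Dden σ n0 n1 := Dpos σ n0 n1 h0 h1
  -- Part 1: swap argument
  have hle : n0 ≤ n1 := by
    have h := hmax n1 n0 h1 h0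
    unfold VS VL at h
    rw [Dsymm] at h
    have h' : (3*σ^2*n1*n0 + 2*σ^2*n0 + n0 + n1*n0) / Dden σ n0 n1 ≤
        (3*σ^2*n0*n1 + 2*σ^2*n1 + n1 + n0*n1) / Dden σ n0 n1 := by
      have e1 : σ^4 * (n1 + n0 + 2*n1*n0) = σ^4 * (n0 + n1 + 2*n0*n1) := by ring
      rw [e1, mul_add, mul_add] at h
      have h2 : lam * ((3*σ^2*n1*n0 + 2*σ^2*n0 + n0 + n1*n0) / Dden σ n0 n1) ≤
          lam * ((3*σ^2*n0*n1 + 2*σ^2*n1 + n1 + n0*n1) / Dden σ n0 n1) := by linarith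
      exact (mul_le_mul_iff_right₀ hl0).mp h2
    rw [div_le_div_iff_of_pos_right hD] at h'
    nlinarith [sq_nonneg σ]
  refine ⟨hle, fun hpos => ?_⟩
  by_contra hlt
  have heq : n1 = n0 := le_antisymm (not_lt.mp hlt) hle
  subst heq
  set t := n1 with ht
  -- perturbation setup
  set D0 : ℝ := σ^2*(2*t+2*t^2) + (1+t)^2 with hD0
  set N0 : ℝ := (3*σ^2+1)*t^2 + (2*σ^2+1)*t with hN0
  set A : ℝ := lam*(2*σ^2+1)*D0 with hA
  set B : ℝ := 2*σ^4*(1+t) + lam*((3*σ^2+1)*D0 - (2*σ^2+1)*N0) with hB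
  have hD0pos : 0 < D0 := by nlinarith [sq_nonneg σ, sq_nonneg (σ*t)]
  have hApos : 0 < A := by positivity
  set ε : ℝ := t * A / (A + t * |B|) with hε
  have hden : 0 < A + t * |B| := by positivity
  have hεpos : 0 < ε := by positivity
  have hεt : ε ≤ t := by
    rw [hε, div_le_iff₀ hden]
    nlinarith [abs_nonneg B, hpos.le]
  have hεB : ε * B < A := by
    have h1 : ε * B ≤ ε * |B| := by
      exact mul_le_mul_of_nonneg_left (le_abs_self B) hεpos.le
    have h2 : ε * |B| < A := by
      rw [hε, div_mul_eq_mul_div, div_lt_iff₀ hden]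
      nlinarith [abs_nonneg B, hpos]
    linarith
  set Dε : ℝ := D0 - (2*σ^2+1)*ε^2 with hDε
  have hDεpos : 0 < Dε := by
    have : ε^2 ≤ t^2 := by nlinarith
    nlinarith [hpos, sq_nonneg σ, mul_pos hpos hpos]
  -- the key identity
  have hDm : Dden σ (t-ε) (t+ε) = Dε := by unfold Dden; rw [hDε, hD0]; ring
  have hDt : Dden σ t t = D0 := by unfold Dden; rw [hD0]; ring
  have h := hmax (t-ε) (t+ε) (by linarith) (by linarith)
  unfold VS VL at h
  rw [hDm, hDt] at h
  have key : lam * (σ^4 * (t - ε + (t + ε) + 2*(t-ε)*(t+ε)) / Dε +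
        (3*σ^2*(t-ε)*(t+ε) + 2*σ^2*(t+ε) + (t+ε) + (t-ε)*(t+ε)) / Dε) +
      (1-lam) * (σ^4 * (t - ε + (t + ε) + 2*(t-ε)*(t+ε)) / Dε) - c*((t-ε)+(t+ε)) -
      (lam * (σ^4 * (t + t + 2*t*t) / D0 +
        (3*σ^2*t*t + 2*σ^2*t + t + t*t) / D0) +
      (1-lam) * (σ^4 * (t + t + 2*t*t) / D0) - c*(t+t)) =
      ε * (A - ε * B) / (Dε * D0) := by
    rw [div_add_div _ _ hDεpos.ne' hDεpos.ne', div_add_div _ _ hD0pos.ne' hD0pos.ne',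
      eq_div_iff (mul_ne_zero hDεpos.ne' hD0pos.ne')]
    field_simp
    rw [hA, hB, hN0, hDε, hD0]
    ring
  have hposΔ : 0 < ε * (A - ε * B) / (Dε * D0) := by
    apply div_pos
    · exact mul_pos hεpos (by linarith)
    · exact mul_pos hDεpos hD0pos
  linarith [key, h]
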